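/- Let χ₁ ≥ χ₂ > 0, let U₁, U₂ be independent real random variables with laws N(0, χ₁) and N(0, χ₂), set q := √(χ₂/χ₁) and Ω := χ₁ + χ₂, let A₀ > 0 and t > 0, and define h_g := A₀·exp(−2(U₁² + U₂²)/t). Set ϖ := (1+q²)·t/(4q·Ω). Then the law of h_g is absolutely continuous with respect to Lebesgue measure with density f(x) = (ϖ/A₀)·(x/A₀)^{((1+q²)ϖ/(2q)) − 1} · I₀( −((1−q²)ϖ/(2q))·ln(x/A₀) ) for 0 < x ≤ A₀, and f(x) = 0 otherwise. -/

import Mathlib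

open Real MeasureTheory ProbabilityTheory

/-- Modified Bessel function of the first kind of order zero:
`I₀(x) = (1/π) ∫₀^π exp(x cos τ) dτ`. -/
noncomputable def besselI0 (x : ℝ) : ℝ :=
  (1 / π) * ∫ τ in (0:ℝ)..π, Real.exp (x * Real.cos τ)


open Set
open scoped ENNReal NNReal

set_option maxHeartbeats 1000000

lemma besselI0_nonneg (x : ℝ) : 0 ≤ besselI0 x := by
  unfold besselI0
  apply mul_nonneg (by positivity)
  apply intervalIntegral.integral_nonneg pi_nonneg
  intro u _; positivity

lemma lintegral_image_deriv {s : Set ℝ} {f g' : ℝ → ℝ}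
    (hs : MeasurableSet s) (hf' : ∀ x ∈ s, HasDerivWithinAt f (g' x) s x)
    (hf : Set.InjOn f s) (g : ℝ → ℝ≥0∞) :
    ∫⁻ x in f '' s, g x = ∫⁻ x in s, ENNReal.ofReal |g' x| * g (f x) := by
  simpa only [ContinuousLinearMap.det_toSpanSingleton] using
    lintegral_image_eq_lintegral_abs_det_fderiv_mul volume hs
      (fun x hx => (hf' x hx).hasFDerivWithinAt) hf g

lemma lintegral_comp_polarCoord_symm' (g : ℝ × ℝ → ℝ≥0∞) :
    ∫⁻ p in polarCoord.target, ENNReal.ofReal p.1 * g (polarCoord.symm p) = ∫⁻ p, g p := by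
  set B : ℝ × ℝ → ℝ × ℝ →L[ℝ] ℝ × ℝ := fun p =>
    LinearMap.toContinuousLinearMap (Matrix.toLin (Module.Basis.finTwoProd ℝ) (Module.Basis.finTwoProd ℝ)
      !![Real.cos p.2, -p.1 * Real.sin p.2; Real.sin p.2, p.1 * Real.cos p.2])
  have A : ∀ p ∈ polarCoord.target, HasFDerivWithinAt polarCoord.symm (B p) polarCoord.target p :=
    fun p _ => (hasFDerivAt_polarCoord_symm p).hasFDerivWithinAt
  have B_det : ∀ p, (B p).det = p.1 := by
    intro p
    conv_rhs => rw [← one_mul p.1, ← cos_sq_add_sin_sq p.2]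
    simp only [B, neg_mul, LinearMap.det_toContinuousLinearMap, LinearMap.det_toLin,
      Matrix.det_fin_two_of, sub_neg_eq_add]
    ring
  have hinj : Set.InjOn polarCoord.symm polarCoord.target := by
    have := polarCoord.symm.injOn
    rwa [OpenPartialHomeomorph.symm_source] at this
  have himg : polarCoord.symm '' polarCoord.target = polarCoord.source :=
    polarCoord.symm_image_target_eq_source
  calc ∫⁻ p in polarCoord.target, ENNReal.ofReal p.1 * g (polarCoord.symm p)
      = ∫⁻ p in polarCoord.target, ENNReal.ofReal |(B p).det| * g (polarCoord.symm p) := by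
        apply setLIntegral_congr_fun polarCoord.open_target.measurableSet
        intro p hp
        dsimp only
        rw [B_det, abs_of_pos hp.1]
    _ = ∫⁻ p in polarCoord.symm '' polarCoord.target, g p :=
        (lintegral_image_eq_lintegral_abs_det_fderiv_mul volume
          polarCoord.open_target.measurableSet A hinj g).symm
    _ = ∫⁻ p, g p := by
        rw [himg, ← setLIntegral_univ (μ := volume)]
        exact setLIntegral_congr polarCoord_source_ae_eq_univ

lemma integral_exp_cos_two_mul (k : ℝ) :
    ∫ θ in (-π)..π, Real.exp (k * Real.cos (2 * θ)) = 2 * π * besselI0 k := by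
  have hper : Function.Periodic (fun u => Real.exp (k * Real.cos u)) (2 * π) := by
    intro u; simp [Real.cos_add_two_pi]
  have hcont : ∀ a b : ℝ, IntervalIntegrable (fun u => Real.exp (k * Real.cos u)) volume a b :=
    fun a b => (Real.continuous_exp.comp
      (continuous_const.mul Real.continuous_cos)).intervalIntegrable a b
  have h1 : ∫ θ in (-π)..π, Real.exp (k * Real.cos (2 * θ))
      = (2:ℝ)⁻¹ • ∫ u in (2 * -π)..(2 * π), Real.exp (k * Real.cos u) :=
    intervalIntegral.integral_comp_mul_left (f := fun u => Real.exp (k * Real.cos u)) two_ne_zero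
  have h2 : ∫ u in (-(2*π))..(0:ℝ), Real.exp (k * Real.cos u)
      = ∫ u in (0:ℝ)..(2*π), Real.exp (k * Real.cos u) := by
    simpa using hper.intervalIntegral_add_eq (-(2*π)) 0
  have h2' : ∫ u in (-(2*π))..(2 * π), Real.exp (k * Real.cos u)
      = 2 * ∫ u in (0:ℝ)..(2*π), Real.exp (k * Real.cos u) := by
    have h := intervalIntegral.integral_add_adjacent_intervals (a := -(2*π)) (b := 0) (c := 2*π)
      (hcont _ _) (hcont _ _)
    rw [← h, h2]; ring
  have h3 : ∫ u in (0:ℝ)..(2*π), Real.exp (k * Real.cos u)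
      = ∫ u in (-π)..π, Real.exp (k * Real.cos u) := by
    have h := hper.intervalIntegral_add_eq 0 (-π)
    simpa [two_mul, ← sub_eq_add_neg, add_assoc] using h
  have h4 : ∫ u in (-π)..(0:ℝ), Real.exp (k * Real.cos u)
      = ∫ u in (0:ℝ)..π, Real.exp (k * Real.cos u) := by
    have h := intervalIntegral.integral_comp_neg (a := (0:ℝ)) (b := π)
      (fun u => Real.exp (k * Real.cos u))
    simpa [Real.cos_neg] using h.symm
  have h5 : ∫ u in (-π)..π, Real.exp (k * Real.cos u)
      = 2 * ∫ u in (0:ℝ)..π, Real.exp (k * Real.cos u) := by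
    have h := intervalIntegral.integral_add_adjacent_intervals (a := -π) (b := 0) (c := π)
      (hcont _ _) (hcont _ _)
    rw [← h, h4]; ring
  have hI : besselI0 k = (1 / π) * ∫ τ in (0:ℝ)..π, Real.exp (k * Real.cos τ) := rfl
  have hπ : (π:ℝ) ≠ 0 := Real.pi_ne_zero
  rw [h1]
  have h6 : (2 : ℝ) * -π = -(2*π) := by ring
  rw [h6, h2', h3, h5, hI]
  field_simp
  ring

lemma gaussian_prod_eq_withDensity (v₁ v₂ : ℝ≥0) (h₁ : v₁ ≠ 0) (h₂ : v₂ ≠ 0) :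
    (gaussianReal 0 v₁).prod (gaussianReal 0 v₂)
      = (volume : Measure (ℝ × ℝ)).withDensity
          (fun p => gaussianPDF 0 v₁ p.1 * gaussianPDF 0 v₂ p.2) := by
  apply Measure.prod_eq
  intro s t hs ht
  rw [Measure.volume_eq_prod, withDensity_apply _ (hs.prod ht), ← Measure.prod_restrict,
    lintegral_prod_mul (measurable_gaussianPDF 0 v₁).aemeasurable
      (measurable_gaussianPDF 0 v₂).aemeasurable,
    gaussianReal_of_var_ne_zero _ h₁, gaussianReal_of_var_ne_zero _ h₂,
    withDensity_apply _ hs, withDensity_apply _ ht]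

/-- Eq. (32): the PDF of the 3D GML `h_g = A₀ exp(−2(U₁² + U₂²)/t)` for a centered bivariate
Gaussian misalignment with independent components of variances `χ₁ ≥ χ₂ > 0`:  with
`q = √(χ₂/χ₁)`, `Ω = χ₁ + χ₂` and `ϖ = (1+q²)t/(4qΩ)`, the density is
`(ϖ/A₀)(x/A₀)^{(1+q²)ϖ/(2q)−1} I₀(−((1−q²)ϖ/(2q)) ln(x/A₀))` on `(0, A₀]` and 0 otherwise. -/
theorem GML_pdf_3D {α : Type*} [MeasurableSpace α]
    (P : Measure α) [IsProbabilityMeasure P]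
    (χ₁ χ₂ : ℝ) (hχ₂ : 0 < χ₂) (hχ : χ₂ ≤ χ₁)
    (U₁ U₂ : α → ℝ) (hU₁ : Measurable U₁) (hU₂ : Measurable U₂)
    (hlaw₁ : Measure.map U₁ P = gaussianReal 0 χ₁.toNNReal)
    (hlaw₂ : Measure.map U₂ P = gaussianReal 0 χ₂.toNNReal)
    (hindep : IndepFun U₁ U₂ P)
    (A₀ t : ℝ) (hA₀ : 0 < A₀) (ht : 0 < t)
    (q Ωm ϖ : ℝ) (hq : q = Real.sqrt (χ₂ / χ₁)) (hΩ : Ωm = χ₁ + χ₂)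
    (hϖ : ϖ = (1 + q ^ 2) * t / (4 * q * Ωm)) :
    Measure.map (fun ω => A₀ * Real.exp (-2 * ((U₁ ω) ^ 2 + (U₂ ω) ^ 2) / t)) P
      = volume.withDensity (fun x => ENNReal.ofReal (
          if 0 < x ∧ x ≤ A₀ then
            (ϖ / A₀) * (x / A₀) ^ ((1 + q ^ 2) * ϖ / (2 * q) - 1) *
              besselI0 (-((1 - q ^ 2) * ϖ / (2 * q)) * Real.log (x / A₀))
          else 0)) := by
  have hχ₁ : 0 < χ₁ := hχ₂.trans_le hχ
  -- basic square roots
  set s₁ := Real.sqrt χ₁ with hs₁def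
  set s₂ := Real.sqrt χ₂ with hs₂def
  have hs₁ : 0 < s₁ := Real.sqrt_pos.mpr hχ₁
  have hs₂ : 0 < s₂ := Real.sqrt_pos.mpr hχ₂
  have hs₁sq : s₁ ^ 2 = χ₁ := Real.sq_sqrt hχ₁.le
  have hs₂sq : s₂ ^ 2 = χ₂ := Real.sq_sqrt hχ₂.le
  have hqv : q = s₂ / s₁ := by rw [hq, hs₁def, hs₂def, Real.sqrt_div hχ₂.le]
  have hq0 : 0 < q := hqv ▸ div_pos hs₂ hs₁
  -- constants
  set a : ℝ := (χ₁ + χ₂) / (4 * χ₁ * χ₂) with ha_def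
  set b : ℝ := (χ₁ - χ₂) / (4 * χ₁ * χ₂) with hb_def
  set c' : ℝ := 1 / (2 * (s₁ * s₂)) with hc'_def
  set κ : ℝ := (1 + q ^ 2) * ϖ / (2 * q) with hκ_def
  set lam : ℝ := (1 - q ^ 2) * ϖ / (2 * q) with hlam_def
  have hϖv : ϖ = t / (4 * (s₁ * s₂)) := by
    rw [hϖ, hqv, hΩ, ← hs₁sq, ← hs₂sq]
    field_simp
  have hc' : 2 * ϖ / t = c' := by rw [hϖv, hc'_def]; field_simp; ring
  have hκv : 2 * κ / t = a := by
    rw [hκ_def, hϖv, hqv, ha_def, ← hs₁sq, ← hs₂sq]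
    field_simp
  have hlamv : 2 * lam / t = b := by
    rw [hlam_def, hϖv, hqv, hb_def, ← hs₁sq, ← hs₂sq]
    field_simp
  -- variances as NNReal
  have hv₁ : χ₁.toNNReal ≠ 0 := by
    simp only [ne_eq, Real.toNNReal_eq_zero, not_le]; exact hχ₁
  have hv₂ : χ₂.toNNReal ≠ 0 := by
    simp only [ne_eq, Real.toNNReal_eq_zero, not_le]; exact hχ₂
  have hv₁c : (χ₁.toNNReal : ℝ) = χ₁ := Real.coe_toNNReal _ hχ₁.le
  have hv₂c : (χ₂.toNNReal : ℝ) = χ₂ := Real.coe_toNNReal _ hχ₂.le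
  -- the pushforward map on ℝ²
  set m : ℝ × ℝ → ℝ := fun p => A₀ * Real.exp (-2 * (p.1 ^ 2 + p.2 ^ 2) / t) with hm_def
  have hmc : Continuous m := by
    apply continuous_const.mul
    exact Real.continuous_exp.comp (by fun_prop)
  have hm : Measurable m := hmc.measurable
  have hV : Measurable fun ω => (U₁ ω, U₂ ω) := hU₁.prodMk hU₂
  have hmap : Measure.map (fun ω => A₀ * Real.exp (-2 * ((U₁ ω) ^ 2 + (U₂ ω) ^ 2) / t)) P
      = Measure.map m (Measure.map (fun ω => (U₁ ω, U₂ ω)) P) := by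
    rw [Measure.map_map hm hV]; rfl
  have hprod : Measure.map (fun ω => (U₁ ω, U₂ ω)) P
      = (gaussianReal 0 χ₁.toNNReal).prod (gaussianReal 0 χ₂.toNNReal) := by
    rw [← hlaw₁, ← hlaw₂]
    exact (indepFun_iff_map_prod_eq_prod_map_map hU₁.aemeasurable hU₂.aemeasurable).mp hindep
  set dens2 : ℝ × ℝ → ℝ≥0∞ :=
    fun p => gaussianPDF 0 χ₁.toNNReal p.1 * gaussianPDF 0 χ₂.toNNReal p.2 with hdens2_def
  have hdens2m : Measurable dens2 :=
    ((measurable_gaussianPDF 0 χ₁.toNNReal).comp measurable_fst).mul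
      ((measurable_gaussianPDF 0 χ₂.toNNReal).comp measurable_snd)
  refine Measure.ext fun B hB => ?_
  rw [hmap, hprod, gaussian_prod_eq_withDensity _ _ hv₁ hv₂, Measure.map_apply hm hB,
    withDensity_apply _ (hm hB), withDensity_apply _ hB]
  set G : ℝ × ℝ → ℝ≥0∞ := (m ⁻¹' B).indicator dens2 with hG_def
  have hGm : Measurable G := hdens2m.indicator (hm hB)
  have E1 : ∫⁻ p in m ⁻¹' B, dens2 p = ∫⁻ p, G p := (lintegral_indicator (hm hB) dens2).symm
  have E2 : ∫⁻ p, G p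
      = ∫⁻ p in (Ioi (0:ℝ)) ×ˢ (Ioo (-π) π), ENNReal.ofReal p.1 * G (polarCoord.symm p) := by
    rw [← lintegral_comp_polarCoord_symm' G, polarCoord_target]
  have E4 : ∫⁻ p in (Ioi (0:ℝ)) ×ˢ (Ioo (-π) π), ENNReal.ofReal p.1 * G (polarCoord.symm p)
      = ∫⁻ r in Ioi (0:ℝ), ∫⁻ θ in Ioo (-π) π,
          ENNReal.ofReal r * G (r * Real.cos θ, r * Real.sin θ) := by
    rw [Measure.volume_eq_prod, ← Measure.prod_restrict]
    rw [lintegral_prod _ (by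
      apply AEMeasurable.mul
      · exact (ENNReal.measurable_ofReal.comp measurable_fst).aemeasurable
      · refine (hGm.comp ?_).aemeasurable
        have h : (↑polarCoord.symm : ℝ × ℝ → ℝ × ℝ)
            = fun p => (p.1 * Real.cos p.2, p.1 * Real.sin p.2) := by
          funext p; exact polarCoord_symm_apply p
        exact h ▸ (by fun_prop : Measurable
          fun p : ℝ × ℝ => (p.1 * Real.cos p.2, p.1 * Real.sin p.2)))]
    simp [polarCoord_symm_apply]
  classical
  set T : ℝ → ℝ≥0∞ := fun s => if A₀ * Real.exp (-2 * s / t) ∈ B then 1 else 0 with hT_def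
  set c₀ : ℝ := (Real.sqrt (2*π*χ₁))⁻¹ * (Real.sqrt (2*π*χ₂))⁻¹ with hc₀_def
  have hc₀pos : 0 < c₀ := by positivity
  have hc₀ : c₀ * (2*π) = 2 * c' := by
    rw [hc₀_def, hc'_def, ← mul_inv, ← Real.sqrt_mul (by positivity)]
    have h1 : 2*π*χ₁ * (2*π*χ₂) = (2*π)^2 * (χ₁ * χ₂) := by ring
    rw [h1, Real.sqrt_mul (by positivity), Real.sqrt_sq (by positivity),
      Real.sqrt_mul hχ₁.le, ← hs₁def, ← hs₂def]
    field_simp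
  have hdens : ∀ u v : ℝ, dens2 (u, v) = ENNReal.ofReal
      (((Real.sqrt (2*π*χ₁))⁻¹ * Real.exp (-(u^2)/(2*χ₁))) *
        ((Real.sqrt (2*π*χ₂))⁻¹ * Real.exp (-(v^2)/(2*χ₂)))) := by
    intro u v
    rw [hdens2_def]
    simp only [gaussianPDF, gaussianPDFReal, sub_zero]
    rw [← ENNReal.ofReal_mul (by positivity)]
    rw [hv₁c, hv₂c]
  -- the exponent rearrangement
  have hexps : ∀ r θ : ℝ,
      (((Real.sqrt (2*π*χ₁))⁻¹ * Real.exp (-((r * Real.cos θ)^2)/(2*χ₁))) *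
        ((Real.sqrt (2*π*χ₂))⁻¹ * Real.exp (-((r * Real.sin θ)^2)/(2*χ₂))))
      = c₀ * Real.exp (-(a * r^2)) * Real.exp (b * r^2 * Real.cos (2*θ)) := by
    intro r θ
    have hXY : -((r * Real.cos θ)^2)/(2*χ₁) + -((r * Real.sin θ)^2)/(2*χ₂)
        = -(a * r^2) + b * r^2 * (2 * Real.cos θ ^ 2 - 1) := by
      have hexpand : (r * Real.sin θ)^2 = r^2 * (1 - Real.cos θ^2) := by
        rw [mul_pow, Real.sin_sq]
      have hexpand2 : (r * Real.cos θ)^2 = r^2 * Real.cos θ^2 := by rw [mul_pow]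
      rw [hexpand, hexpand2, ha_def, hb_def]
      field_simp
      ring
    calc (((Real.sqrt (2*π*χ₁))⁻¹ * Real.exp (-((r * Real.cos θ)^2)/(2*χ₁))) *
        ((Real.sqrt (2*π*χ₂))⁻¹ * Real.exp (-((r * Real.sin θ)^2)/(2*χ₂))))
        = c₀ * Real.exp (-((r * Real.cos θ)^2)/(2*χ₁) + -((r * Real.sin θ)^2)/(2*χ₂)) := by
          rw [Real.exp_add, hc₀_def]; ring
      _ = c₀ * Real.exp (-(a * r^2) + b * r^2 * (2 * Real.cos θ ^ 2 - 1)) := by rw [hXY]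
      _ = c₀ * Real.exp (-(a * r^2)) * Real.exp (b * r^2 * Real.cos (2*θ)) := by
          rw [Real.exp_add, Real.cos_two_mul]; ring
  have hrsq : ∀ r θ : ℝ, (r * Real.cos θ)^2 + (r * Real.sin θ)^2 = r^2 := by
    intro r θ
    have := Real.sin_sq_add_cos_sq θ
    nlinarith
  have E5 : ∫⁻ r in Ioi (0:ℝ), ∫⁻ θ in Ioo (-π) π,
        ENNReal.ofReal r * G (r * Real.cos θ, r * Real.sin θ)
      = ∫⁻ r in Ioi (0:ℝ), T (r^2) *
          ENNReal.ofReal (2 * r * (c' * Real.exp (-(a * r^2)) * besselI0 (b * r^2))) := by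
    apply setLIntegral_congr_fun measurableSet_Ioi
    intro r hr
    have hr0 : 0 < r := hr
    have hGpt : ∀ p : ℝ × ℝ, G p = T (p.1^2 + p.2^2) * dens2 p := by
      intro p
      have hmp : m p = A₀ * Real.exp (-2 * (p.1^2 + p.2^2) / t) := rfl
      rw [hG_def, hT_def]
      dsimp only
      by_cases hmem : m p ∈ B
      · rw [Set.indicator_of_mem (mem_preimage.mpr hmem), if_pos (hmp ▸ hmem), one_mul]
      · rw [Set.indicator_of_notMem (fun h => hmem (mem_preimage.mp h)),
          if_neg (fun h => hmem (by rw [hmp]; exact h)), zero_mul]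
    have hpt : ∀ θ : ℝ, ENNReal.ofReal r * G (r * Real.cos θ, r * Real.sin θ)
        = (ENNReal.ofReal r * T (r^2) * ENNReal.ofReal (c₀ * Real.exp (-(a * r^2))))
            * ENNReal.ofReal (Real.exp (b * r^2 * Real.cos (2*θ))) := by
      intro θ
      rw [hGpt (r * Real.cos θ, r * Real.sin θ)]
      dsimp only
      rw [hrsq r θ, hdens, hexps r θ, ENNReal.ofReal_mul (by positivity),
        ENNReal.ofReal_mul (by positivity)]
      ring
    calc ∫⁻ θ in Ioo (-π) π, ENNReal.ofReal r * G (r * Real.cos θ, r * Real.sin θ)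
        = ∫⁻ θ in Ioo (-π) π,
            (ENNReal.ofReal r * T (r^2) * ENNReal.ofReal (c₀ * Real.exp (-(a * r^2))))
              * ENNReal.ofReal (Real.exp (b * r^2 * Real.cos (2*θ))) := by
          exact lintegral_congr fun θ => hpt θ
      _ = (ENNReal.ofReal r * T (r^2) * ENNReal.ofReal (c₀ * Real.exp (-(a * r^2))))
            * ∫⁻ θ in Ioo (-π) π, ENNReal.ofReal (Real.exp (b * r^2 * Real.cos (2*θ))) := by
          apply lintegral_const_mul
          exact ENNReal.measurable_ofReal.comp (Real.continuous_exp.comp (by fun_prop :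
            Continuous fun θ : ℝ => b * r^2 * Real.cos (2*θ))).measurable
      _ = (ENNReal.ofReal r * T (r^2) * ENNReal.ofReal (c₀ * Real.exp (-(a * r^2))))
            * ENNReal.ofReal (2 * π * besselI0 (b * r^2)) := by
          congr 1
          rw [← ofReal_integral_eq_lintegral_ofReal]
          · rw [← integral_Ioc_eq_integral_Ioo,
              ← intervalIntegral.integral_of_le (by linarith [Real.pi_pos] : -π ≤ π),
              integral_exp_cos_two_mul (b * r^2)]
          · exact ((Real.continuous_exp.comp (by fun_prop :
                Continuous fun θ : ℝ => b * r^2 * Real.cos (2*θ))).integrableOn_Icc).mono_set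
              Ioo_subset_Icc_self
          · filter_upwards with θ using (Real.exp_pos _).le
      _ = T (r^2) * ENNReal.ofReal (2 * r * (c' * Real.exp (-(a * r^2)) * besselI0 (b * r^2))) := by
          by_cases hmem : A₀ * Real.exp (-2 * r^2 / t) ∈ B
          · have hT1 : T (r^2) = 1 := by simp only [hT_def]; exact if_pos hmem
            rw [hT1, mul_one, one_mul, ← ENNReal.ofReal_mul hr0.le,
              ← ENNReal.ofReal_mul (by positivity)]
            congr 1
            linear_combination (r * Real.exp (-(a * r^2)) * besselI0 (b * r^2)) * hc₀
          · have hT0 : T (r^2) = 0 := by simp only [hT_def]; exact if_neg hmem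
            rw [hT0, mul_zero, zero_mul, zero_mul, zero_mul]
  -- LHS: substitution s = r²
  set H : ℝ → ℝ≥0∞ :=
    fun s => T s * ENNReal.ofReal (c' * Real.exp (-(a * s)) * besselI0 (b * s)) with hH_def
  have hsq_img : (fun r : ℝ => r^2) '' Ioi 0 = Ioi 0 := by
    ext x
    constructor
    · rintro ⟨r, hr, rfl⟩; exact pow_pos (mem_Ioi.mp hr) 2
    · intro hx
      exact ⟨Real.sqrt x, Real.sqrt_pos.mpr hx, Real.sq_sqrt (le_of_lt hx)⟩
  have hsq_inj : Set.InjOn (fun r : ℝ => r^2) (Ioi 0) := by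
    intro x hx y hy hxy
    simp only at hxy
    nlinarith [mem_Ioi.mp hx, mem_Ioi.mp hy]
  have hsq_deriv : ∀ r ∈ Ioi (0:ℝ), HasDerivWithinAt (fun r : ℝ => r^2) (2*r) (Ioi 0) r := by
    intro r _
    simpa using (hasDerivAt_pow 2 r).hasDerivWithinAt
  have E6 : ∫⁻ s in Ioi (0:ℝ), H s
      = ∫⁻ r in Ioi (0:ℝ), T (r^2) *
          ENNReal.ofReal (2 * r * (c' * Real.exp (-(a * r^2)) * besselI0 (b * r^2))) := by
    conv_lhs => rw [← hsq_img]
    rw [lintegral_image_deriv measurableSet_Ioi hsq_deriv hsq_inj H]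
    apply setLIntegral_congr_fun measurableSet_Ioi
    intro r hr
    have hr0 : (0:ℝ) < r := hr
    rw [hH_def]
    dsimp only
    rw [abs_of_pos (by positivity : (0:ℝ) < 2*r),
      ENNReal.ofReal_mul (by positivity : (0:ℝ) ≤ 2*r)]
    ring
  -- RHS: reduce to an integral over Ioo 0 A₀
  set dreal : ℝ → ℝ :=
    fun x => ϖ / A₀ * (x / A₀) ^ (κ - 1) * besselI0 (-lam * Real.log (x / A₀)) with hdreal_def
  set D : ℝ → ℝ≥0∞ :=
    fun x => ENNReal.ofReal (if 0 < x ∧ x ≤ A₀ then dreal x else 0) with hD_def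
  set F : ℝ → ℝ≥0∞ := fun x => (if x ∈ B then 1 else 0) * D x with hF_def
  have E7 : ∫⁻ x in B, D x = ∫⁻ x in Ioo 0 A₀, F x := by
    rw [← lintegral_indicator hB, ← lintegral_indicator measurableSet_Ioo]
    apply lintegral_congr_ae
    filter_upwards [compl_mem_ae_iff.mpr (measure_singleton A₀)] with x hx
    have hxA : x ≠ A₀ := hx
    by_cases hIoo : x ∈ Ioo 0 A₀
    · by_cases hxB : x ∈ B <;>
        simp [Set.indicator_apply, hIoo, hxB, hF_def]
    · have hD0 : D x = 0 := by
        rw [hD_def]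
        have hcnd : ¬ (0 < x ∧ x ≤ A₀) := by
          rintro ⟨h1, h2⟩
          exact hIoo ⟨h1, lt_of_le_of_ne h2 hxA⟩
        simp [hcnd]
      by_cases hxB : x ∈ B <;>
        simp [Set.indicator_apply, hIoo, hxB, hD0, hF_def]
  -- change of variables x = A₀ exp(-2s/t)
  have hgm_img : (fun s : ℝ => A₀ * Real.exp (-2 * s / t)) '' Ioi 0 = Ioo 0 A₀ := by
    ext x
    constructor
    · rintro ⟨s, hs, rfl⟩
      have hs0 : (0:ℝ) < s := hs
      constructor
      · positivity
      · have h1 : Real.exp (-2 * s / t) < 1 := by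
          apply Real.exp_lt_one_iff.mpr
          exact div_neg_of_neg_of_pos (by linarith) ht
        have h2 := mul_lt_mul_of_pos_left h1 hA₀
        simpa using h2
    · rintro ⟨hx0, hxA⟩
      refine ⟨t / 2 * Real.log (A₀ / x), ?_, ?_⟩
      · have h1 : 1 < A₀ / x := (one_lt_div hx0).mpr hxA
        have h2 : 0 < Real.log (A₀ / x) := Real.log_pos h1
        simp only [mem_Ioi]
        positivity
      · have h3 : -2 * (t / 2 * Real.log (A₀ / x)) / t = Real.log (x / A₀) := by
          have h4 : -2 * (t / 2 * Real.log (A₀ / x)) / t = -Real.log (A₀ / x) := by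
            field_simp
          rw [h4, ← Real.log_inv, inv_div]
        show A₀ * Real.exp (-2 * (t / 2 * Real.log (A₀ / x)) / t) = x
        rw [h3, Real.exp_log (by positivity), mul_div_cancel₀ _ (ne_of_gt hA₀)]
  have hgm_inj : Set.InjOn (fun s : ℝ => A₀ * Real.exp (-2 * s / t)) (Ioi 0) := by
    intro x _ y _ hxy
    simp only at hxy
    have h1 : Real.exp (-2 * x / t) = Real.exp (-2 * y / t) :=
      mul_left_cancel₀ (ne_of_gt hA₀) hxy
    have h2 : -2 * x / t = -2 * y / t := Real.exp_injective h1
    have h3 : (-2 * x / t) * t = (-2 * y / t) * t := by rw [h2]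
    rw [div_mul_cancel₀ _ (ne_of_gt ht), div_mul_cancel₀ _ (ne_of_gt ht)] at h3
    linarith
  have hgm_deriv : ∀ s ∈ Ioi (0:ℝ), HasDerivWithinAt (fun s : ℝ => A₀ * Real.exp (-2 * s / t))
      (A₀ * (Real.exp (-2 * s / t) * (-2 / t))) (Ioi 0) s := by
    intro s _
    have h1 : HasDerivAt (fun s : ℝ => -2 * s / t) (-2 / t) s := by
      simpa using ((hasDerivAt_id s).const_mul (-2 : ℝ)).div_const t
    exact ((h1.exp).const_mul A₀).hasDerivWithinAt
  have E8 : ∫⁻ x in Ioo 0 A₀, F x = ∫⁻ s in Ioi (0:ℝ),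
      ENNReal.ofReal |A₀ * (Real.exp (-2 * s / t) * (-2 / t))| *
        F (A₀ * Real.exp (-2 * s / t)) := by
    rw [← hgm_img, lintegral_image_deriv measurableSet_Ioi hgm_deriv hgm_inj F]
  have E9 : ∫⁻ s in Ioi (0:ℝ),
      ENNReal.ofReal |A₀ * (Real.exp (-2 * s / t) * (-2 / t))| *
        F (A₀ * Real.exp (-2 * s / t)) = ∫⁻ s in Ioi (0:ℝ), H s := by
    apply setLIntegral_congr_fun measurableSet_Ioi
    intro s hs
    have hs0 : (0:ℝ) < s := hs
    have habs : |A₀ * (Real.exp (-2 * s / t) * (-2 / t))|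
        = A₀ * (2 / t) * Real.exp (-2 * s / t) := by
      rw [abs_of_neg (by
        apply mul_neg_of_pos_of_neg hA₀
        apply mul_neg_of_pos_of_neg (Real.exp_pos _)
        exact div_neg_of_neg_of_pos (by norm_num) ht)]
      ring
    have hcond : 0 < A₀ * Real.exp (-2 * s / t) ∧ A₀ * Real.exp (-2 * s / t) ≤ A₀ := by
      constructor
      · positivity
      · have h1 : Real.exp (-2 * s / t) ≤ 1 := by
          apply Real.exp_le_one_iff.mpr
          exact (div_neg_of_neg_of_pos (by linarith) ht).le
        calc A₀ * Real.exp (-2 * s / t) ≤ A₀ * 1 := by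
              exact mul_le_mul_of_nonneg_left h1 hA₀.le
          _ = A₀ := mul_one _
    have hdiv : A₀ * Real.exp (-2 * s / t) / A₀ = Real.exp (-2 * s / t) :=
      mul_div_cancel_left₀ _ (ne_of_gt hA₀)
    have hdv : dreal (A₀ * Real.exp (-2 * s / t))
        = ϖ / A₀ * Real.exp ((-2 * s / t) * (κ - 1)) * besselI0 (b * s) := by
      rw [hdreal_def]
      dsimp only
      rw [hdiv, Real.log_exp, Real.rpow_def_of_pos (Real.exp_pos _), Real.log_exp]
      congr 2
      rw [← hlamv]
      field_simp
    have hexp2 : A₀ * (2 / t) * Real.exp (-2 * s / t) *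
        (ϖ / A₀ * Real.exp ((-2 * s / t) * (κ - 1)))
        = (2 * ϖ / t) * Real.exp (-((2 * κ / t) * s)) := by
      have ht' : t ≠ 0 := ne_of_gt ht
      have hA' : A₀ ≠ 0 := ne_of_gt hA₀
      have harg : -2 * s / t + (-2 * s / t) * (κ - 1) = -((2 * κ / t) * s) := by
        field_simp
        ring
      calc A₀ * (2 / t) * Real.exp (-2 * s / t) * (ϖ / A₀ * Real.exp ((-2 * s / t) * (κ - 1)))
          = (A₀ * (2 / t) * (ϖ / A₀)) * Real.exp (-2 * s / t + (-2 * s / t) * (κ - 1)) := by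
            rw [Real.exp_add]; ring
        _ = (2 * ϖ / t) * Real.exp (-((2 * κ / t) * s)) := by
            rw [harg]; congr 1; field_simp
    have hreal : A₀ * (2 / t) * Real.exp (-2 * s / t) *
        (ϖ / A₀ * Real.exp ((-2 * s / t) * (κ - 1)) * besselI0 (b * s))
        = c' * Real.exp (-(a * s)) * besselI0 (b * s) := by
      calc A₀ * (2 / t) * Real.exp (-2 * s / t) *
            (ϖ / A₀ * Real.exp ((-2 * s / t) * (κ - 1)) * besselI0 (b * s))
          = (A₀ * (2 / t) * Real.exp (-2 * s / t) *
              (ϖ / A₀ * Real.exp ((-2 * s / t) * (κ - 1)))) * besselI0 (b * s) := by ring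
        _ = (2 * ϖ / t) * Real.exp (-((2 * κ / t) * s)) * besselI0 (b * s) := by rw [hexp2]
        _ = c' * Real.exp (-(a * s)) * besselI0 (b * s) := by rw [hc', hκv]
    rw [hF_def]
    dsimp only
    rw [hD_def]
    dsimp only
    rw [if_pos hcond, hdv, habs, hH_def]
    dsimp only
    by_cases hmem : A₀ * Real.exp (-2 * s / t) ∈ B
    · have hT1 : T s = 1 := by simp only [hT_def]; exact if_pos hmem
      rw [if_pos hmem, hT1, one_mul, one_mul, ← ENNReal.ofReal_mul (by positivity)]
      rw [hreal]
    · have hT0 : T s = 0 := by simp only [hT_def]; exact if_neg hmem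
      rw [if_neg hmem, hT0, zero_mul, mul_zero, zero_mul]
  -- assemble everything
  rw [E1, E2, E4, E5, ← E6, E7, E8, E9]
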